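/- There exists an optimal attacker strategy (π, B) whose guessing order π has no inversions, i.e., satisfies p(π(a))·k(π(b)) ≥ p(π(b))·k(π(a)) for all positions a ≤ b. -/

import Mathlib

open Finset

/-- Success probability λ(π,B): sum of probabilities of the first B guesses. -/
noncomputable def lam (n : ℕ) (p : Fin n → ℝ) (π : Equiv.Perm (Fin n)) (B : ℕ) : ℝ :=
  ∑ t : Fin n, if t.val < B then p (π t) else 0

/-- Attacker utility U(π,B) = v·λ(π,B) − Σ_{t<B} k(π(t))·(1 − λ(π,t)). -/
noncomputable def U (n : ℕ) (p k : Fin n → ℝ) (v : ℝ) (π : Equiv.Perm (Fin n)) (B : ℕ) : ℝ :=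
  v * lam n p π B - ∑ t : Fin n, if t.val < B then k (π t) * (1 - lam n p π t.val) else 0

section Helpers

variable {n : ℕ} (p k : Fin n → ℝ) (v : ℝ)

lemma sum_ite_succ_aux (f : Fin n → ℝ) (B : ℕ) (hB : B < n) :
    (∑ t : Fin n, if t.val < B + 1 then f t else 0)
      = (∑ t : Fin n, if t.val < B then f t else 0) + f ⟨B, hB⟩ := by
  have key : ∀ t : Fin n, (if t.val < B + 1 then f t else 0)
      = (if t.val < B then f t else 0) + (if t = ⟨B, hB⟩ then f t else 0) := by
    intro t
    by_cases h1 : t = ⟨B, hB⟩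
    · subst h1; simp
    · have h2 : t.val ≠ B := fun h => h1 (Fin.ext h)
      by_cases h3 : t.val < B
      · rw [if_pos (by omega), if_pos h3, if_neg h1, add_zero]
      · rw [if_neg (by omega), if_neg h3, if_neg h1, add_zero]
  rw [Finset.sum_congr rfl fun t _ => key t, Finset.sum_add_distrib,
    Finset.sum_ite_eq' univ (⟨B, hB⟩ : Fin n) f]
  simp

lemma lam_congr (π π' : Equiv.Perm (Fin n)) (B : ℕ)
    (h : ∀ t : Fin n, t.val < B → π t = π' t) : lam n p π B = lam n p π' B := by
  unfold lam
  refine Finset.sum_congr rfl fun t _ => ?_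
  by_cases ht : t.val < B
  · rw [if_pos ht, if_pos ht, h t ht]
  · rw [if_neg ht, if_neg ht]

lemma lam_succ (π : Equiv.Perm (Fin n)) (B : ℕ) (hB : B < n) :
    lam n p π (B + 1) = lam n p π B + p (π ⟨B, hB⟩) := by
  unfold lam
  exact sum_ite_succ_aux (fun t => p (π t)) B hB

lemma lam_mono (hp : ∀ i, 0 ≤ p i) (π : Equiv.Perm (Fin n)) {B B' : ℕ} (h : B ≤ B') :
    lam n p π B ≤ lam n p π B' := by
  refine Finset.sum_le_sum fun t _ => ?_
  by_cases h1 : t.val < B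
  · rw [if_pos h1, if_pos (lt_of_lt_of_le h1 h)]
  · rw [if_neg h1]
    by_cases h2 : t.val < B'
    · rw [if_pos h2]; exact hp _
    · rw [if_neg h2]

lemma lam_le_one (hp : ∀ i, 0 ≤ p i) (hpsum : ∑ i, p i ≤ 1)
    (π : Equiv.Perm (Fin n)) (B : ℕ) : lam n p π B ≤ 1 := by
  have h1 : lam n p π B ≤ ∑ t : Fin n, p (π t) := by
    refine Finset.sum_le_sum fun t _ => ?_
    by_cases h : t.val < B
    · rw [if_pos h]
    · rw [if_neg h]; exact hp _
  calc lam n p π B ≤ ∑ t : Fin n, p (π t) := h1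
    _ = ∑ i, p i := Equiv.sum_comp π p
    _ ≤ 1 := hpsum

lemma U_congr (π π' : Equiv.Perm (Fin n)) (B : ℕ)
    (h : ∀ t : Fin n, t.val < B → π t = π' t) :
    U n p k v π B = U n p k v π' B := by
  unfold U
  rw [lam_congr p π π' B h]
  congr 1
  refine Finset.sum_congr rfl fun t _ => ?_
  by_cases ht : t.val < B
  · rw [if_pos ht, if_pos ht, h t ht,
      lam_congr p π π' t.val (fun u hu => h u (hu.trans ht))]
  · rw [if_neg ht, if_neg ht]

lemma U_succ (π : Equiv.Perm (Fin n)) (B : ℕ) (hB : B < n) :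
    U n p k v π (B + 1) = U n p k v π B
      + (v * p (π ⟨B, hB⟩) - k (π ⟨B, hB⟩) * (1 - lam n p π B)) := by
  unfold U
  rw [lam_succ p π B hB,
    sum_ite_succ_aux (fun t => k (π t) * (1 - lam n p π t.val)) B hB]
  ring

lemma lam_swap (π : Equiv.Perm (Fin n)) (a b : Fin n) (m : ℕ)
    (hab : a.val < m ↔ b.val < m) :
    lam n p (π * Equiv.swap a b) m = lam n p π m := by
  unfold lam
  have key : ∀ t : Fin n,
      (if t.val < m then p (π (Equiv.swap a b t)) else 0)
        = (if (Equiv.swap a b t).val < m then p (π (Equiv.swap a b t)) else 0) := by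
    intro t
    rcases eq_or_ne t a with rfl | ha
    · rw [Equiv.swap_apply_left]
      by_cases h : t.val < m
      · rw [if_pos h, if_pos (hab.mp h)]
      · rw [if_neg h, if_neg (fun hb => h (hab.mpr hb))]
    · rcases eq_or_ne t b with rfl | hb
      · rw [Equiv.swap_apply_right]
        by_cases h : t.val < m
        · rw [if_pos h, if_pos (hab.mpr h)]
        · rw [if_neg h, if_neg (fun hb2 => h (hab.mp hb2))]
      · rw [Equiv.swap_apply_of_ne_of_ne ha hb]
  calc (∑ t : Fin n, if t.val < m then p ((π * Equiv.swap a b) t) else 0)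
      = ∑ t : Fin n, (if (Equiv.swap a b t).val < m
          then p (π (Equiv.swap a b t)) else 0) :=
        Finset.sum_congr rfl fun t _ => key t
    _ = ∑ t : Fin n, if t.val < m then p (π t) else 0 :=
        Equiv.sum_comp (Equiv.swap a b) (fun u => if u.val < m then p (π u) else 0)

lemma U_swap (π : Equiv.Perm (Fin n)) (j : ℕ) (hj1 : j + 1 < n) (B : ℕ) (hB : j + 1 < B) :
    U n p k v (π * Equiv.swap ⟨j, Nat.lt_of_succ_lt hj1⟩ ⟨j + 1, hj1⟩) B
      = U n p k v π B
        + (k (π ⟨j, Nat.lt_of_succ_lt hj1⟩) * p (π ⟨j + 1, hj1⟩)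
          - k (π ⟨j + 1, hj1⟩) * p (π ⟨j, Nat.lt_of_succ_lt hj1⟩)) := by
  classical
  have hjn : j < n := Nat.lt_of_succ_lt hj1
  set a : Fin n := ⟨j, hjn⟩ with ha
  set b : Fin n := ⟨j + 1, hj1⟩ with hb
  set s : Equiv.Perm (Fin n) := Equiv.swap a b with hs
  have hab : a ≠ b := by
    intro h
    have := Fin.val_eq_val a b |>.mpr h
    simp [ha, hb] at this
  have hswap_ne : ∀ m : ℕ, m ≠ j + 1 → lam n p (π * s) m = lam n p π m := by
    intro m hm
    refine lam_swap p π a b m ?_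
    constructor
    · intro h; simp only [ha] at h; simp only [hb]; omega
    · intro h; simp only [hb] at h; simp only [ha]; omega
  have hlamB : lam n p (π * s) B = lam n p π B := hswap_ne B (by omega)
  have hlamj : lam n p (π * s) j = lam n p π j := hswap_ne j (by omega)
  have hsa : (π * s) a = π b := by
    simp [hs, Equiv.Perm.mul_apply, Equiv.swap_apply_left]
  have hsb : (π * s) b = π a := by
    simp [hs, Equiv.Perm.mul_apply, Equiv.swap_apply_right]
  have hlamjs : lam n p (π * s) (j + 1) = lam n p π j + p (π b) := by
    rw [lam_succ p (π * s) j hjn, hlamj]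
    congr 1
    exact congrArg p hsa
  have hlamj1 : lam n p π (j + 1) = lam n p π j + p (π a) := lam_succ p π j hjn
  -- the two cost sums
  have hdiff : (∑ t : Fin n, if t.val < B then k ((π * s) t) * (1 - lam n p (π * s) t.val) else 0)
      - (∑ t : Fin n, if t.val < B then k (π t) * (1 - lam n p π t.val) else 0)
      = (k (π b) * (1 - lam n p π j) - k (π a) * (1 - lam n p π j))
        + (k (π a) * (1 - (lam n p π j + p (π b)))
          - k (π b) * (1 - (lam n p π j + p (π a)))) := by
    rw [← Finset.sum_sub_distrib]
    have := Finset.sum_eq_add (s := (univ : Finset (Fin n)))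
      (f := fun t => (if t.val < B then k ((π * s) t) * (1 - lam n p (π * s) t.val) else 0)
        - (if t.val < B then k (π t) * (1 - lam n p π t.val) else 0))
      a b hab
      (by
        intro t _ ht
        obtain ⟨hta, htb⟩ := ht
        have hst : (π * s) t = π t := by
          simp [hs, Equiv.Perm.mul_apply, Equiv.swap_apply_of_ne_of_ne hta htb]
        have hlt : lam n p (π * s) t.val = lam n p π t.val := by
          refine hswap_ne t.val ?_
          intro h
          exact htb (Fin.ext (by simpa [hb] using h))
        rw [hst, hlt, sub_self])
      (by intro h; exact absurd (mem_univ a) h)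
      (by intro h; exact absurd (mem_univ b) h)
    rw [this]
    have haB : a.val < B := by simp only [ha]; omega
    have hbB : b.val < B := by simp only [hb]; omega
    rw [if_pos haB, if_pos haB, if_pos hbB, if_pos hbB]
    rw [hsa, hsb, hlamj, hlamjs, hlamj1]
  unfold U
  rw [hlamB]
  linear_combination -hdiff

lemma antitone_of_adj {n : ℕ} (f : Fin n → ℝ)
    (hadj : ∀ (j : ℕ) (hj : j + 1 < n), f ⟨j + 1, hj⟩ ≤ f ⟨j, Nat.lt_of_succ_lt hj⟩) :
    ∀ a b : Fin n, a ≤ b → f b ≤ f a := by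
  intro a b hab
  have hab' : a.val ≤ b.val := hab
  obtain ⟨d, hd⟩ : ∃ d, b.val = a.val + d := ⟨b.val - a.val, by omega⟩
  clear hab hab'
  induction d generalizing b with
  | zero =>
    have : b = a := Fin.ext (by omega)
    rw [this]
  | succ m ih =>
    have hm : a.val + m < n := by omega
    have h1 : f b ≤ f ⟨a.val + m, hm⟩ := by
      have hb : b = ⟨a.val + m + 1, by omega⟩ := Fin.ext (by simp; omega)
      rw [hb]
      exact hadj (a.val + m) (by omega)
    exact h1.trans (ih ⟨a.val + m, hm⟩ rfl)

end Helpers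

theorem stmt_1 (n : ℕ) (p k : Fin n → ℝ) (v : ℝ)
    (hp : ∀ i, 0 ≤ p i) (hpsum : ∑ i, p i ≤ 1) (hk : ∀ i, 0 < k i) (hv : 0 ≤ v) :
    ∃ (π : Equiv.Perm (Fin n)) (B : ℕ), B ≤ n ∧
      (∀ a b : Fin n, a ≤ b → p (π a) * k (π b) ≥ p (π b) * k (π a)) ∧
      (∀ (π' : Equiv.Perm (Fin n)) (B' : ℕ), B' ≤ n →
        U n p k v π B ≥ U n p k v π' B') := by
  classical
  set r : Fin n → ℝ := fun i => p i / k i with hr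
  have hrk : ∀ i j : Fin n, r j ≤ r i → p i * k j ≥ p j * k i := by
    intro i j h
    exact (div_le_div_iff₀ (hk j) (hk i)).mp h
  by_cases hv0 : v = 0
  · -- trivial case: budget 0, fully sorted order
    refine ⟨Tuple.sort (fun i => -(r i)), 0, Nat.zero_le n, ?_, ?_⟩
    · intro a b hab
      refine hrk _ _ ?_
      have := Tuple.monotone_sort (fun i => -(r i)) hab
      simpa using this
    · intro π' B' hB'
      subst hv0
      have h0 : U n p k 0 (Tuple.sort (fun i => -(r i))) 0 = 0 := by
        unfold U lam; simp
      rw [ge_iff_le, h0]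
      unfold U
      have hnn : (0:ℝ) ≤ ∑ t : Fin n,
          if t.val < B' then k (π' t) * (1 - lam n p π' t.val) else 0 := by
        refine Finset.sum_nonneg fun t _ => ?_
        by_cases h : t.val < B'
        · rw [if_pos h]
          have := lam_le_one p hp hpsum π' t.val
          nlinarith [hk (π' t)]
        · rw [if_neg h]
      linarith
  · have hvpos : 0 < v := lt_of_le_of_ne hv (Ne.symm hv0)
    obtain ⟨⟨π₀, B₀⟩, hmax⟩ := Finite.exists_max
      (fun x : Equiv.Perm (Fin n) × Fin (n + 1) => U n p k v x.1 x.2.val)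
    set B : ℕ := B₀.val with hBdef
    have hBn : B ≤ n := Nat.lt_succ_iff.mp B₀.isLt
    have hmax' : ∀ (π' : Equiv.Perm (Fin n)) (B' : ℕ), B' ≤ n →
        U n p k v π' B' ≤ U n p k v π₀ B := by
      intro π' B' h
      exact hmax (π', ⟨B', Nat.lt_succ_of_le h⟩)
    set g : Fin n → ℕ ×ₗ ℝ := fun t => toLex (min t.val B, -(r (π₀ t))) with hg
    set τ : Equiv.Perm (Fin n) := Tuple.sort g with hτ
    have hmono : Monotone (g ∘ τ) := Tuple.monotone_sort g
    have hfst : ∀ t : Fin n, min (τ t).val B = min t.val B := by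
      have h1 : Monotone ((fun t : Fin n => min t.val B) ∘ τ) := by
        intro x y hxy
        have h2 := hmono hxy
        simp only [hg, Function.comp_apply] at h2
        rcases Prod.Lex.toLex_le_toLex.mp h2 with h | ⟨h, _⟩
        · exact le_of_lt h
        · exact le_of_eq h
      have h2 : Monotone ((fun t : Fin n => min t.val B) ∘ (Equiv.refl (Fin n))) := by
        intro x y hxy
        have : x.val ≤ y.val := hxy
        simp only [Function.comp_apply, Equiv.refl_apply]
        omega
      have h3 := Tuple.unique_monotone (f := fun t : Fin n => min t.val B)
        (σ := τ) (τ := Equiv.refl (Fin n)) h1 h2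
      intro t
      have := congrFun h3 t
      simpa using this
    have hτfix : ∀ t : Fin n, t.val < B → τ t = t := by
      intro t ht
      have h1 := hfst t
      exact Fin.ext (by omega)
    have hτtail : ∀ t : Fin n, B ≤ t.val → B ≤ (τ t).val := by
      intro t ht
      have h1 := hfst t
      omega
    set π : Equiv.Perm (Fin n) := π₀ * τ with hπ
    have hπeq : ∀ t : Fin n, t.val < B → π t = π₀ t := by
      intro t ht
      simp [hπ, Equiv.Perm.mul_apply, hτfix t ht]
    have hUeq : U n p k v π B = U n p k v π₀ B := U_congr p k v π π₀ B hπeq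
    refine ⟨π, B, hBn, ?_, ?_⟩
    swap
    · intro π' B' hB'
      rw [ge_iff_le, hUeq]
      exact hmax' π' B' hB'
    intro a b hab
    refine hrk _ _ (antitone_of_adj (fun t => r (π t)) ?_ a b hab)
    intro j hj1
    have hjn : j < n := Nat.lt_of_succ_lt hj1
    show r (π ⟨j + 1, hj1⟩) ≤ r (π ⟨j, hjn⟩)
    rcases lt_trichotomy (j + 1) B with hcase | hcase | hcase
    · -- both in the attacked prefix
      have ha : π ⟨j, hjn⟩ = π₀ ⟨j, hjn⟩ := hπeq _ (show j < B by omega)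
      have hb : π ⟨j + 1, hj1⟩ = π₀ ⟨j + 1, hj1⟩ := hπeq _ hcase
      rw [ha, hb]
      by_contra hcon
      push_neg at hcon
      have hswap := U_swap p k v π₀ j hj1 B hcase
      have hle := hmax' (π₀ * Equiv.swap ⟨j, hjn⟩ ⟨j + 1, hj1⟩) B hBn
      have hswap' := U_swap p k v π₀ j hj1 B hcase
      have h1 : k (π₀ ⟨j, hjn⟩) * p (π₀ ⟨j + 1, hj1⟩)
          ≤ k (π₀ ⟨j + 1, hj1⟩) * p (π₀ ⟨j, hjn⟩) := by
        have hle2 : U n p k v (π₀ * Equiv.swap ⟨j, Nat.lt_of_succ_lt hj1⟩ ⟨j + 1, hj1⟩) B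
            ≤ U n p k v π₀ B := hmax' _ B hBn
        rw [hswap] at hle2
        linarith
      have h2 := (div_lt_div_iff₀ (hk (π₀ ⟨j, hjn⟩)) (hk (π₀ ⟨j + 1, hj1⟩))).mp hcon
      nlinarith
    · -- boundary case : j + 1 = B
      have hBlt : B < n := by omega
      have ha : π ⟨j, hjn⟩ = π₀ ⟨j, hjn⟩ := hπeq _ (show j < B by omega)
      set b0 : Fin n := ⟨j + 1, hj1⟩ with hb0
      set u : Fin n := τ b0 with hu'
      have hu : B ≤ u.val := hτtail b0 (by simp [hb0]; omega)
      have hπb0 : π b0 = π₀ u := rfl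
      -- marginal gain of the last element of the prefix is nonnegative
      have hsucc := U_succ p k v π₀ j hjn
      have hle1 := hmax' π₀ j (by omega)
      have hA1 : 0 ≤ v * p (π₀ ⟨j, hjn⟩) - k (π₀ ⟨j, hjn⟩) * (1 - lam n p π₀ j) := by
        have : U n p k v π₀ (j + 1) = U n p k v π₀ B := by rw [hcase]
        linarith [hsucc, hle1, this]
      -- marginal gain of adding u right after the prefix is nonpositive
      set s : Equiv.Perm (Fin n) := Equiv.swap b0 u with hs
      have hagree : ∀ t : Fin n, t.val < B → (π₀ * s) t = π₀ t := by
        intro t ht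
        have h1 : t ≠ b0 := by
          intro h; rw [h] at ht; simp [hb0] at ht; omega
        have h2 : t ≠ u := by
          intro h; rw [h] at ht; omega
        simp [hs, Equiv.Perm.mul_apply, Equiv.swap_apply_of_ne_of_ne h1 h2]
      have hUagree : U n p k v (π₀ * s) B = U n p k v π₀ B :=
        U_congr p k v (π₀ * s) π₀ B hagree
      have hlamagree : lam n p (π₀ * s) B = lam n p π₀ B :=
        lam_congr p (π₀ * s) π₀ B hagree
      have hsucc2 := U_succ p k v (π₀ * s) B hBlt
      have hle2 := hmax' (π₀ * s) (B + 1) (by omega)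
      have hBb0 : (⟨B, hBlt⟩ : Fin n) = b0 := Fin.ext (by simp [hb0]; omega)
      have hsb0 : (π₀ * s) b0 = π₀ u := by
        simp [hs, Equiv.Perm.mul_apply, Equiv.swap_apply_left]
      have hA2 : v * p (π₀ u) - k (π₀ u) * (1 - lam n p π₀ B) ≤ 0 := by
        rw [hBb0, hsb0, hlamagree, hUagree] at hsucc2
        linarith [hsucc2, hle2]
      -- chain the inequalities
      have hL1 : lam n p π₀ j ≤ lam n p π₀ B := lam_mono p hp π₀ (by omega)
      have hL2 : lam n p π₀ B ≤ 1 := lam_le_one p hp hpsum π₀ B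
      have hkx := hk (π₀ ⟨j, hjn⟩)
      have hky := hk (π₀ u)
      have key : p (π₀ u) * k (π₀ ⟨j, hjn⟩) ≤ p (π₀ ⟨j, hjn⟩) * k (π₀ u) := by
        have e2 : v * p (π₀ u) ≤ k (π₀ u) * (1 - lam n p π₀ j) := by nlinarith
        have e3 : k (π₀ ⟨j, hjn⟩) * (1 - lam n p π₀ j) ≤ v * p (π₀ ⟨j, hjn⟩) := by linarith
        have e4 := mul_le_mul_of_nonneg_right e2 hkx.le
        have e5 := mul_le_mul_of_nonneg_left e3 hky.le
        have e6 : v * (p (π₀ u) * k (π₀ ⟨j, hjn⟩)) ≤ v * (p (π₀ ⟨j, hjn⟩) * k (π₀ u)) := by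
          nlinarith [e4, e5]
        exact le_of_mul_le_mul_left e6 hvpos
      rw [hπb0, ha]
      exact (div_le_div_iff₀ (hk (π₀ u)) (hk (π₀ ⟨j, hjn⟩))).mpr key
    · -- both in the tail
      have ha := hτtail ⟨j, hjn⟩ (by simp; omega)
      have hb := hτtail ⟨j + 1, hj1⟩ (by simp; omega)
      have h1 : g (τ ⟨j, hjn⟩) ≤ g (τ ⟨j + 1, hj1⟩) := by
        refine hmono ?_
        show (⟨j, hjn⟩ : Fin n) ≤ ⟨j + 1, hj1⟩
        simp [Fin.le_def]
      simp only [hg] at h1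
      rcases Prod.Lex.toLex_le_toLex.mp h1 with h | ⟨_, h2⟩
      · simp only at h
        omega
      · simp only at h2
        have : -(r (π₀ (τ ⟨j, hjn⟩))) ≤ -(r (π₀ (τ ⟨j + 1, hj1⟩))) := h2
        have hπa : π ⟨j, hjn⟩ = π₀ (τ ⟨j, hjn⟩) := rfl
        have hπb : π ⟨j + 1, hj1⟩ = π₀ (τ ⟨j + 1, hj1⟩) := rfl
        rw [hπa, hπb]
        linarith
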